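/- Define g(1)=g(2)=0 and g(s)=max over a+b+c=s (with a,b,c positive integers) of g(a)+g(b)+g(c)+abc. If s is a power of 3, then g(s) = (1/4) C(s+1,3) = T(s), where T(s)=(s+1)s(s-1)/24 for odd s. -/

import Mathlib

lemma amgm_cube (a b c : ℕ) : a^3 + b^3 + c^3 + 24*(a*b*c) ≤ (a+b+c)^3 := by
  zify
  nlinarith [mul_nonneg (Int.ofNat_nonneg a) (sq_nonneg ((b:ℤ) - c)),
    mul_nonneg (Int.ofNat_nonneg b) (sq_nonneg ((c:ℤ) - a)),
    mul_nonneg (Int.ofNat_nonneg c) (sq_nonneg ((a:ℤ) - b))]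

lemma g_upper (g : ℕ → ℕ) (h1 : g 1 = 0) (h2 : g 2 = 0)
    (hrec : ∀ s : ℕ, 3 ≤ s →
      IsGreatest {v : ℕ | ∃ a b c : ℕ, 0 < a ∧ 0 < b ∧ 0 < c ∧ a + b + c = s ∧
        v = g a + g b + g c + a * b * c} (g s)) :
    ∀ s : ℕ, 1 ≤ s → 24 * g s + s ≤ s^3 := by
  intro s
  induction s using Nat.strong_induction_on with
  | _ s ih =>
    intro hs
    match s, hs with
    | 1, _ => simp [h1]
    | 2, _ => simp [h2]
    | (n+3), _ =>
      obtain ⟨a, b, c, ha, hb, hc, habc, hval⟩ := (hrec (n+3) (by omega)).1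
      have iha := ih a (by omega) ha
      have ihb := ih b (by omega) hb
      have ihc := ih c (by omega) hc
      have key := amgm_cube a b c
      rw [habc] at key
      calc 24 * g (n+3) + (n+3) = (24*g a + a) + (24*g b + b) + (24*g c + c)
            + 24*(a*b*c) := by rw [hval]; omega
        _ ≤ a^3 + b^3 + c^3 + 24*(a*b*c) := by omega
        _ ≤ (n+3)^3 := key

lemma g_exact (g : ℕ → ℕ) (h1 : g 1 = 0) (h2 : g 2 = 0)
    (hrec : ∀ s : ℕ, 3 ≤ s →
      IsGreatest {v : ℕ | ∃ a b c : ℕ, 0 < a ∧ 0 < b ∧ 0 < c ∧ a + b + c = s ∧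
        v = g a + g b + g c + a * b * c} (g s)) :
    ∀ k : ℕ, 24 * g (3^k) + 3^k = (3^k)^3 := by
  intro k
  induction k with
  | zero => simp [h1]
  | succ k ih =>
    have hpos : 0 < 3^k := Nat.pow_pos (by norm_num)
    have hub : 24 * g (3^(k+1)) + 3^(k+1) ≤ (3^(k+1))^3 :=
      g_upper g h1 h2 hrec _ (Nat.one_le_iff_ne_zero.mpr (by positivity))
    have hlb : g (3^k) + g (3^k) + g (3^k) + 3^k * 3^k * 3^k ≤ g (3^(k+1)) := by
      apply (hrec (3^(k+1)) (by calc (3:ℕ) = 3^1 := by norm_num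
        _ ≤ 3^(k+1) := Nat.pow_le_pow_right (by norm_num) (by omega))).2
      exact ⟨3^k, 3^k, 3^k, hpos, hpos, hpos, by ring, by ring⟩
    have e1 : (3^(k+1):ℕ)^3 = 27 * (3^k)^3 := by ring
    have e2 : (3^(k+1):ℕ) = 3 * 3^k := by ring
    have e3 : (3^k:ℕ) * 3^k * 3^k = (3^k)^3 := by ring
    omega

theorem g_pow_three (g : ℕ → ℕ) (h1 : g 1 = 0) (h2 : g 2 = 0)
    (hrec : ∀ s : ℕ, 3 ≤ s →
      IsGreatest {v : ℕ | ∃ a b c : ℕ, 0 < a ∧ 0 < b ∧ 0 < c ∧ a + b + c = s ∧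
        v = g a + g b + g c + a * b * c} (g s))
    (k : ℕ) :
    g (3 ^ k) = Nat.choose (3 ^ k + 1) 3 / 4 ∧
      Nat.choose (3 ^ k + 1) 3 / 4 = (3 ^ k + 1) * 3 ^ k * (3 ^ k - 1) / 24 := by
  have hex := g_exact g h1 h2 hrec k
  have hpos : 0 < 3^k := Nat.pow_pos (by norm_num)
  obtain ⟨m, hm⟩ : ∃ m, 3^k = m + 1 := ⟨3^k - 1, by omega⟩
  rw [hm] at hex ⊢
  have hch : (m + 1 + 1).choose 3 = (m+2) * (m+1) * m / 6 := by
    rw [Nat.choose_eq_descFactorial_div_factorial]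
    congr 1
    simp [Nat.descFactorial]; ring
  have hid : (m+2) * (m+1) * m + (m+1) = (m+1)^3 := by ring
  have hprod : (m+2) * (m+1) * m = 24 * g (m+1) := by linarith [hex, hid]
  rw [hch, hprod]
  constructor
  · omega
  · have h5 : m + 1 - 1 = m := rfl
    rw [h5, show m+1+1 = m+2 from rfl, hprod]
    omega
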